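/- Let L = h²∂² + 2u with u ∈ R. For every A ∈ Ψ(R) there exists a unique Y ∈ Ψ(R) such that Y · L^{1/2} + L^{1/2} · Y = A. In particular, if A = −2c with c ∈ R satisfying ∂c = 0, the unique solution is Y = −c L^{−1/2}. -/

import Mathlib

open scoped BigOperators

/-- Generalized binomial coefficient `C(k,l) = k(k-1)⋯(k-l+1)/l!` for `k : ℤ`. -/
def gbinom (k : ℤ) (l : ℕ) : ℚ :=
  (∏ i ∈ Finset.range l, ((k : ℚ) - i)) / (Nat.factorial l)

/-- Pseudo-differential operators (and symbols): coefficient functions `ℤ → R`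
with support bounded above.  The parameter `d` (the derivation) determines the product. -/
structure PDO (R : Type) [CommRing R] [Algebra ℚ R] (d : R →+ R) where
  coeff : ℤ → R
  bdd : ∃ N : ℤ, ∀ n : ℤ, N < n → coeff n = 0

namespace PDO

variable {R : Type} [CommRing R] [Algebra ℚ R] {d : R →+ R}

theorem ext' {A B : PDO R d} (h : A.coeff = B.coeff) : A = B := by
  cases A; cases B; cases h; rfl

set_option linter.unusedSectionVars false in
theorem iterD_zero (d : R →+ R) (j : ℕ) : d^[j] (0 : R) = 0 := by
  induction j with
  | zero => rfl
  | succ j ih => rw [Function.iterate_succ_apply', ih, map_zero]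

instance : Zero (PDO R d) := ⟨⟨fun _ => 0, ⟨0, fun _ _ => rfl⟩⟩⟩

instance : One (PDO R d) :=
  ⟨⟨fun n => if n = 0 then 1 else 0, ⟨0, fun n hn => if_neg (by omega)⟩⟩⟩

instance : Add (PDO R d) :=
  ⟨fun A B => ⟨fun n => A.coeff n + B.coeff n, by
    obtain ⟨N, hN⟩ := A.bdd
    obtain ⟨M, hM⟩ := B.bdd
    exact ⟨max N M, fun n hn => by
      show A.coeff n + B.coeff n = 0
      rw [hN n (lt_of_le_of_lt (le_max_left N M) hn),
        hM n (lt_of_le_of_lt (le_max_right N M) hn), add_zero]⟩⟩⟩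

instance : Neg (PDO R d) :=
  ⟨fun A => ⟨fun n => -A.coeff n, by
    obtain ⟨N, hN⟩ := A.bdd
    exact ⟨N, fun n hn => by show -A.coeff n = 0; rw [hN n hn, neg_zero]⟩⟩⟩

instance : SMul ℚ (PDO R d) :=
  ⟨fun c A => ⟨fun n => c • A.coeff n, by
    obtain ⟨N, hN⟩ := A.bdd
    exact ⟨N, fun n hn => by show c • A.coeff n = 0; rw [hN n hn, smul_zero]⟩⟩⟩

instance : AddCommGroup (PDO R d) where
  add := (· + ·)
  zero := 0
  neg := Neg.neg
  add_assoc A B C := ext' (funext fun n => add_assoc (A.coeff n) (B.coeff n) (C.coeff n))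
  zero_add A := ext' (funext fun n => zero_add (A.coeff n))
  add_zero A := ext' (funext fun n => add_zero (A.coeff n))
  add_comm A B := ext' (funext fun n => add_comm (A.coeff n) (B.coeff n))
  neg_add_cancel A := ext' (funext fun n => neg_add_cancel (A.coeff n))
  nsmul := nsmulRec
  zsmul := zsmulRec

/-- The product of pseudo-differential operators, determined by the commutation rule
`∂^k · f = Σ_{l ≥ 0} C(k,l) (∂^l f) ∂^(k-l)`. -/
noncomputable instance : Mul (PDO R d) :=
  ⟨fun A B =>
    ⟨fun n => ∑ᶠ (k : ℤ) (m : ℤ),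
        if _ : 0 ≤ k + m - n then
          A.coeff k * (gbinom k (k + m - n).toNat • (d^[(k + m - n).toNat] (B.coeff m)))
        else 0, by
      obtain ⟨N, hN⟩ := A.bdd
      obtain ⟨M, hM⟩ := B.bdd
      refine ⟨N + M, fun n hn => ?_⟩
      have hz : ∀ k m : ℤ,
          (if _ : 0 ≤ k + m - n then
            A.coeff k * (gbinom k (k + m - n).toNat • (d^[(k + m - n).toNat] (B.coeff m)))
          else 0) = 0 := by
        intro k m
        by_cases hl : 0 ≤ k + m - n
        · rw [dif_pos hl]
          by_cases hk : N < k
          · rw [hN k hk, zero_mul]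
          · rw [hM m (by omega), iterD_zero, smul_zero, mul_zero]
        · rw [dif_neg hl]
      simp only [hz, finsum_zero]⟩⟩

noncomputable def npow (A : PDO R d) : ℕ → PDO R d
  | 0 => 1
  | n + 1 => npow A n * A

noncomputable instance : Pow (PDO R d) ℕ := ⟨fun A n => A.npow n⟩

/-- The monomial `r ∂^k`. -/
def mono (r : R) (k : ℤ) : PDO R d :=
  ⟨fun n => if n = k then r else 0, ⟨k, fun n hn => if_neg (by omega)⟩⟩

/-- The constant (order-zero) operator `r`. -/
def const (r : R) : PDO R d := mono r 0

/-- The operator `∂`. -/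
def del : PDO R d := mono (1 : R) 1

/-- The operator `h∂`. -/
def hdel (h : Rˣ) : PDO R d := mono (h : R) 1

/-- The Lax operator `L = h²∂² + 2u`. -/
def Lop (h : Rˣ) (u : R) : PDO R d :=
  ⟨fun n => if n = 2 then (h : R) ^ 2 else if n = 0 then 2 * u else 0,
   ⟨2, fun n hn => by
      show (if n = 2 then (h : R) ^ 2 else if n = 0 then 2 * u else 0) = 0
      rw [if_neg (by omega), if_neg (by omega)]⟩⟩

/-- The differential part `A₊`. -/
def pos (A : PDO R d) : PDO R d :=
  ⟨fun n => if 0 ≤ n then A.coeff n else 0, by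
    obtain ⟨N, hN⟩ := A.bdd
    refine ⟨N, fun n hn => ?_⟩
    show (if 0 ≤ n then A.coeff n else 0) = 0
    by_cases h0 : (0 : ℤ) ≤ n
    · rw [if_pos h0]; exact hN n hn
    · rw [if_neg h0]⟩

/-- The integral part `A₋ = A − A₊`. -/
def negp (A : PDO R d) : PDO R d :=
  ⟨fun n => if n < 0 then A.coeff n else 0, ⟨0, fun n hn => if_neg (by omega)⟩⟩

/-- The residue `Res_∂ A = a₋₁`. -/
def res (A : PDO R d) : R := A.coeff (-1)

/-- The formal adjoint, determined by `(f ∂^k)* = (−∂)^k · f`. -/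
noncomputable def adj (A : PDO R d) : PDO R d :=
  ⟨fun n => ∑ᶠ k : ℤ,
      if _ : 0 ≤ k - n then
        (((-1 : ℚ) ^ k) * gbinom k (k - n).toNat) • (d^[(k - n).toNat] (A.coeff k))
      else 0, by
    obtain ⟨N, hN⟩ := A.bdd
    refine ⟨N, fun n hn => ?_⟩
    have hz : ∀ k : ℤ, (if _ : 0 ≤ k - n then
        (((-1 : ℚ) ^ k) * gbinom k (k - n).toNat) • (d^[(k - n).toNat] (A.coeff k))
      else 0) = 0 := by
      intro k
      by_cases hl : 0 ≤ k - n
      · rw [dif_pos hl, hN k (by omega), iterD_zero, smul_zero]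
      · rw [dif_neg hl]
    simp only [hz, finsum_zero]⟩

/-- The operator `P(h∂) = Σ pₙ hⁿ ∂ⁿ` associated to the symbol `P(λ) = Σ pₙ λⁿ`. -/
noncomputable def ofSymbol (h : Rˣ) (A : PDO R d) : PDO R d :=
  ⟨fun n => A.coeff n * ((h ^ n : Rˣ) : R), by
    obtain ⟨N, hN⟩ := A.bdd
    exact ⟨N, fun n hn => by show A.coeff n * ((h ^ n : Rˣ) : R) = 0; rw [hN n hn, zero_mul]⟩⟩

/-- Apply `d^[i]` to each coefficient. -/
def mapD (i : ℕ) (A : PDO R d) : PDO R d :=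
  ⟨fun n => d^[i] (A.coeff n), by
    obtain ⟨N, hN⟩ := A.bdd
    exact ⟨N, fun n hn => by show d^[i] (A.coeff n) = 0; rw [hN n hn, iterD_zero]⟩⟩

/-- The coefficientwise extension of an additive map `D : R →+ R`. -/
def mapHom (D : R →+ R) (A : PDO R d) : PDO R d :=
  ⟨fun n => D (A.coeff n), by
    obtain ⟨N, hN⟩ := A.bdd
    exact ⟨N, fun n hn => by show D (A.coeff n) = 0; rw [hN n hn, map_zero]⟩⟩

/-- The commutator `[A, B] = AB − BA`. -/
noncomputable def comm (A B : PDO R d) : PDO R d := A * B - B * A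

end PDO

/-- The Leibniz rule: `d` is a derivation. -/
def Leibniz {R : Type} [CommRing R] [Algebra ℚ R] (d : R →+ R) : Prop :=
  ∀ a b : R, d (a * b) = a * d b + b * d a

/-- `aₙ = 1/(2n+1)!!`. -/
def kdvA (n : ℕ) : ℚ := 1 / (Nat.doubleFactorial (2 * n + 1))

/-- `bₙ = (2n−1)!!` (with `b₀ = (−1)!! = 1`). -/
def kdvB (n : ℕ) : ℚ := (Nat.doubleFactorial (2 * n - 1) : ℕ)

section Aux

open Finset

set_option linter.unusedSectionVars false

namespace PDO

variable {R : Type} [CommRing R] [Algebra ℚ R] {d : R →+ R}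

theorem gbinom_zero' (k : ℤ) : gbinom k 0 = 1 := by simp [gbinom]

theorem gbinom_zero_left {l : ℕ} (hl : 0 < l) : gbinom (0 : ℤ) l = 0 := by
  unfold gbinom
  rw [Finset.prod_eq_zero (Finset.mem_range.2 hl) (by norm_num), zero_div]

theorem zero_coeff (n : ℤ) : (0 : PDO R d).coeff n = 0 := rfl
theorem one_coeff (n : ℤ) : (1 : PDO R d).coeff n = if n = 0 then 1 else 0 := rfl
theorem add_coeff (A B : PDO R d) (n : ℤ) : (A + B).coeff n = A.coeff n + B.coeff n := rfl
theorem neg_coeff (A : PDO R d) (n : ℤ) : (-A).coeff n = -A.coeff n := rfl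
theorem sub_coeff (A B : PDO R d) (n : ℤ) : (A - B).coeff n = A.coeff n - B.coeff n := by
  rw [sub_eq_add_neg, add_coeff, neg_coeff, ← sub_eq_add_neg]
theorem const_coeff (c : R) (n : ℤ) :
    (const c : PDO R d).coeff n = if n = 0 then c else 0 := rfl

theorem finsum2_eq {M : Type*} [AddCommMonoid M] (G : ℤ → ℤ → M) (s : Finset ℤ)
    (t : ℤ → Finset ℤ) (h1 : ∀ k : ℤ, ∀ m ∉ t k, G k m = 0)
    (h2 : ∀ k ∉ s, (∑ m ∈ t k, G k m) = 0) :
    (∑ᶠ (k : ℤ) (m : ℤ), G k m) = ∑ k ∈ s, ∑ m ∈ t k, G k m := by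
  have hin : ∀ k : ℤ, (∑ᶠ (m : ℤ), G k m) = ∑ m ∈ t k, G k m := fun k =>
    finsum_eq_sum_of_support_subset _ (Function.support_subset_iff'.2 fun m hm =>
      h1 k m (by simpa using hm))
  rw [finsum_congr hin]
  exact finsum_eq_sum_of_support_subset _ (Function.support_subset_iff'.2 fun k hk =>
    h2 k (by simpa using hk))

theorem mul_coeff (A B : PDO R d) {N M : ℤ}
    (hA : ∀ n : ℤ, N < n → A.coeff n = 0) (hB : ∀ n : ℤ, M < n → B.coeff n = 0) (n : ℤ) :
    (A * B).coeff n = ∑ k ∈ Finset.Icc (n - M) N, ∑ m ∈ Finset.Icc (n - k) M,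
      A.coeff k * (gbinom k (k + m - n).toNat • (d^[(k + m - n).toNat] (B.coeff m))) := by
  rw [show (A * B).coeff n = ∑ᶠ (k : ℤ) (m : ℤ),
      (if _ : 0 ≤ k + m - n then
        A.coeff k * (gbinom k (k + m - n).toNat • (d^[(k + m - n).toNat] (B.coeff m)))
      else 0) from rfl,
    finsum2_eq _ (Finset.Icc (n - M) N) (fun k => Finset.Icc (n - k) M) ?h1 ?h2]
  · refine Finset.sum_congr rfl fun k _ => Finset.sum_congr rfl fun m hm => ?_
    simp only [Finset.mem_Icc] at hm
    exact dif_pos (by omega)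
  case h1 =>
    intro k m hm
    simp only [Finset.mem_Icc, not_and_or, not_le] at hm
    rcases hm with hm | hm
    · exact dif_neg (by omega)
    · by_cases hl : 0 ≤ k + m - n
      · rw [dif_pos hl, hB m hm, iterD_zero, smul_zero, mul_zero]
      · exact dif_neg hl
  case h2 =>
    intro k hk
    simp only [Finset.mem_Icc, not_and_or, not_le] at hk
    rcases hk with hk | hk
    · refine Finset.sum_eq_zero fun m hm => ?_
      simp only [Finset.mem_Icc] at hm
      exact absurd (hm.1.trans hm.2) (by omega)
    · refine Finset.sum_eq_zero fun m _ => ?_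
      by_cases hl : 0 ≤ k + m - n
      · rw [dif_pos hl, hA k hk, zero_mul]
      · exact dif_neg hl

end PDO
end Aux
section Aux2
set_option linter.unusedSectionVars false
namespace PDO
variable {R : Type} [CommRing R] [Algebra ℚ R] {d : R →+ R}

theorem sub_mul' (A B C : PDO R d) : (A - B) * C = A * C - B * C := by
  obtain ⟨Na, ha⟩ := A.bdd; obtain ⟨Nb, hb⟩ := B.bdd; obtain ⟨Nc, hc⟩ := C.bdd
  refine ext' (funext fun n => ?_)
  have hab : ∀ m : ℤ, max Na Nb < m → (A - B).coeff m = 0 := fun m hm => by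
    rw [sub_coeff, ha m ((le_max_left Na Nb).trans_lt hm),
      hb m ((le_max_right Na Nb).trans_lt hm), sub_zero]
  rw [sub_coeff, mul_coeff (A - B) C hab hc,
    mul_coeff A C (fun m hm => ha m ((le_max_left Na Nb).trans_lt hm)) hc,
    mul_coeff B C (fun m hm => hb m ((le_max_right Na Nb).trans_lt hm)) hc,
    ← Finset.sum_sub_distrib]
  refine Finset.sum_congr rfl fun k _ => ?_
  rw [← Finset.sum_sub_distrib]
  refine Finset.sum_congr rfl fun m _ => ?_
  rw [sub_coeff, sub_mul]

theorem mul_sub' (A B C : PDO R d) : A * (B - C) = A * B - A * C := by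
  obtain ⟨Na, ha⟩ := A.bdd; obtain ⟨Nb, hb⟩ := B.bdd; obtain ⟨Nc, hc⟩ := C.bdd
  refine ext' (funext fun n => ?_)
  have hbc : ∀ m : ℤ, max Nb Nc < m → (B - C).coeff m = 0 := fun m hm => by
    rw [sub_coeff, hb m ((le_max_left Nb Nc).trans_lt hm),
      hc m ((le_max_right Nb Nc).trans_lt hm), sub_zero]
  rw [sub_coeff, mul_coeff A (B - C) ha hbc,
    mul_coeff A B ha (fun m hm => hb m ((le_max_left Nb Nc).trans_lt hm)),
    mul_coeff A C ha (fun m hm => hc m ((le_max_right Nb Nc).trans_lt hm)),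
    ← Finset.sum_sub_distrib]
  refine Finset.sum_congr rfl fun k _ => ?_
  rw [← Finset.sum_sub_distrib]
  refine Finset.sum_congr rfl fun m _ => ?_
  rw [sub_coeff, iterate_map_sub, smul_sub, mul_sub]

theorem zero_mul' (B : PDO R d) : (0 : PDO R d) * B = 0 := by
  obtain ⟨Nb, hb⟩ := B.bdd
  refine ext' (funext fun n => ?_)
  rw [mul_coeff (0 : PDO R d) B (N := 0) (fun _ _ => rfl) hb, zero_coeff]
  exact Finset.sum_eq_zero fun k _ => Finset.sum_eq_zero fun m _ => by
    rw [zero_coeff, zero_mul]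

theorem mul_zero' (A : PDO R d) : A * (0 : PDO R d) = 0 := by
  obtain ⟨Na, ha⟩ := A.bdd
  refine ext' (funext fun n => ?_)
  rw [mul_coeff A (0 : PDO R d) ha (M := 0) (fun _ _ => rfl), zero_coeff]
  exact Finset.sum_eq_zero fun k _ => Finset.sum_eq_zero fun m _ => by
    rw [zero_coeff, iterD_zero, smul_zero, mul_zero]

theorem neg_mul' (A B : PDO R d) : (-A) * B = -(A * B) := by
  rw [← zero_sub, sub_mul', zero_mul', zero_sub]

theorem mul_neg' (A B : PDO R d) : A * (-B) = -(A * B) := by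
  rw [← zero_sub, mul_sub', mul_zero', zero_sub]

theorem iterD_const_mul (hd : Leibniz d) {c : R} (hc : d c = 0) (l : ℕ) (x : R) :
    d^[l] (c * x) = c * d^[l] x := by
  induction l generalizing x with
  | zero => rfl
  | succ l ih =>
    rw [Function.iterate_succ_apply, Function.iterate_succ_apply,
      show d (c * x) = c * d x from by rw [hd c x, hc, mul_zero, add_zero], ih]

theorem iterD_zero_of {c : R} (hc : d c = 0) {l : ℕ} (hl : 0 < l) : d^[l] c = 0 := by
  obtain ⟨l', rfl⟩ : ∃ l', l = l' + 1 := ⟨l - 1, by omega⟩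
  rw [Function.iterate_succ_apply, hc, iterD_zero]

theorem const_bdd (c : R) : ∀ n : ℤ, (0 : ℤ) < n → (const c : PDO R d).coeff n = 0 :=
  fun n hn => by rw [const_coeff, if_neg (by omega)]

theorem const_mul_coeff (c : R) (B : PDO R d) (n : ℤ) :
    (const c * B).coeff n = c * B.coeff n := by
  obtain ⟨M, hM⟩ := B.bdd
  rw [mul_coeff (const c) B (const_bdd c) hM n]
  have hterm : ∀ k ∈ Finset.Icc (n - M) 0,
      (∑ m ∈ Finset.Icc (n - k) M, (const c : PDO R d).coeff k *
        (gbinom k (k + m - n).toNat • d^[(k + m - n).toNat] (B.coeff m)))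
      = if k = 0 then c * B.coeff n else 0 := by
    intro k _
    by_cases hk0 : k = 0
    · subst hk0
      rw [if_pos rfl]
      have hin : ∀ m ∈ Finset.Icc (n - 0) M, (const c : PDO R d).coeff 0 *
          (gbinom 0 (0 + m - n).toNat • d^[(0 + m - n).toNat] (B.coeff m))
          = if m = n then c * B.coeff n else 0 := by
        intro m hm
        simp only [Finset.mem_Icc] at hm
        by_cases hmn : m = n
        · subst hmn
          rw [if_pos rfl, show (0 + m - m).toNat = 0 from by omega, gbinom_zero', one_smul,
            Function.iterate_zero_apply, const_coeff, if_pos rfl]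
        · rw [if_neg hmn, gbinom_zero_left (by omega), zero_smul, mul_zero]
      rw [Finset.sum_congr rfl hin, Finset.sum_ite_eq' _ n (fun _ => c * B.coeff n)]
      by_cases hnM : n ∈ Finset.Icc (n - 0) M
      · rw [if_pos hnM]
      · rw [if_neg hnM]
        simp only [Finset.mem_Icc] at hnM
        rw [hM n (by omega), mul_zero]
    · rw [if_neg hk0]
      exact Finset.sum_eq_zero fun m _ => by rw [const_coeff, if_neg hk0, zero_mul]
  rw [Finset.sum_congr rfl hterm, Finset.sum_ite_eq' _ 0 (fun _ => c * B.coeff n)]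
  by_cases h0 : (0 : ℤ) ∈ Finset.Icc (n - M) 0
  · rw [if_pos h0]
  · rw [if_neg h0]
    simp only [Finset.mem_Icc] at h0
    rw [hM n (by omega), mul_zero]

theorem mul_const_coeff {c : R} (hc : d c = 0) (A : PDO R d) (n : ℤ) :
    (A * const c).coeff n = A.coeff n * c := by
  obtain ⟨N, hN⟩ := A.bdd
  rw [mul_coeff A (const c) hN (const_bdd c) n]
  have hterm : ∀ k ∈ Finset.Icc (n - 0) N,
      (∑ m ∈ Finset.Icc (n - k) 0, A.coeff k *
        (gbinom k (k + m - n).toNat • d^[(k + m - n).toNat] ((const c : PDO R d).coeff m)))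
      = if k = n then A.coeff n * c else 0 := by
    intro k hk
    simp only [Finset.mem_Icc] at hk
    by_cases hkn : k = n
    · subst hkn
      rw [if_pos rfl, show k - k = 0 from by omega, Finset.Icc_self, Finset.sum_singleton,
        show (k + 0 - k).toNat = 0 from by omega, gbinom_zero', one_smul,
        Function.iterate_zero_apply, const_coeff, if_pos rfl]
    · rw [if_neg hkn]
      refine Finset.sum_eq_zero fun m hm => ?_
      simp only [Finset.mem_Icc] at hm
      by_cases hm0 : m = 0
      · subst hm0
        rw [const_coeff, if_pos rfl, iterD_zero_of hc (by omega), smul_zero, mul_zero]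
      · rw [const_coeff, if_neg hm0, iterD_zero, smul_zero, mul_zero]
  rw [Finset.sum_congr rfl hterm, Finset.sum_ite_eq' _ n (fun _ => A.coeff n * c)]
  by_cases h0 : n ∈ Finset.Icc (n - 0) N
  · rw [if_pos h0]
  · rw [if_neg h0]
    simp only [Finset.mem_Icc] at h0
    rw [hN n (by omega), zero_mul]

theorem const_mul_assoc (c : R) (B C : PDO R d) :
    (const c * B) * C = const c * (B * C) := by
  obtain ⟨Nb, hb⟩ := B.bdd; obtain ⟨Nc, hc'⟩ := C.bdd
  refine ext' (funext fun n => ?_)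
  have hcb : ∀ m : ℤ, Nb < m → (const c * B).coeff m = 0 := fun m hm => by
    rw [const_mul_coeff, hb m hm, mul_zero]
  rw [const_mul_coeff, mul_coeff (const c * B) C hcb hc' n, mul_coeff B C hb hc' n,
    Finset.mul_sum]
  refine Finset.sum_congr rfl fun k _ => ?_
  rw [Finset.mul_sum]
  refine Finset.sum_congr rfl fun m _ => ?_
  rw [const_mul_coeff, mul_assoc]

theorem mul_const_comm_assoc (hd : Leibniz d) {c : R} (hc : d c = 0) (A B : PDO R d) :
    A * (const c * B) = const c * (A * B) := by
  obtain ⟨Na, ha⟩ := A.bdd; obtain ⟨Nb, hb⟩ := B.bdd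
  refine ext' (funext fun n => ?_)
  have hcb : ∀ m : ℤ, Nb < m → (const c * B).coeff m = 0 := fun m hm => by
    rw [const_mul_coeff, hb m hm, mul_zero]
  rw [const_mul_coeff, mul_coeff A (const c * B) ha hcb n, mul_coeff A B ha hb n,
    Finset.mul_sum]
  refine Finset.sum_congr rfl fun k _ => ?_
  rw [Finset.mul_sum]
  refine Finset.sum_congr rfl fun m _ => ?_
  rw [const_mul_coeff, iterD_const_mul hd hc, ← mul_smul_comm, mul_left_comm]

theorem const_mul_one (c : R) : (const c : PDO R d) * 1 = const c := by
  refine ext' (funext fun n => ?_)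
  rw [const_mul_coeff, one_coeff, const_coeff]
  by_cases hn : n = 0 <;> simp [hn]

end PDO
end Aux2
section Aux3
set_option linter.unusedSectionVars false
namespace PDO
variable {R : Type} [CommRing R] [Algebra ℚ R] {d : R →+ R}

/-- The part of the anticommutator coefficient at `p` that only involves `z m` for `m ≥ p`. -/
noncomputable def Efun (W : PDO R d) (N : ℤ) (z : ℤ → R) (p : ℤ) : R :=
  (∑ k ∈ Finset.Icc p (N - 1), ∑ m ∈ Finset.Icc (p - k) 1,
      z k * (gbinom k (k + m - p).toNat • d^[(k + m - p).toNat] (W.coeff m)))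
  + ∑ k ∈ Finset.Icc (p - (N - 1)) 1, ∑ m ∈ Finset.Icc p (N - 1),
      if 0 ≤ k + m - p then
        W.coeff k * (gbinom k (k + m - p).toNat • d^[(k + m - p).toNat] (z m))
      else 0

theorem Efun_eq_zero (W : PDO R d) {N : ℤ} (z : ℤ → R) {p : ℤ} (hp : N ≤ p) :
    Efun W N z p = 0 := by
  unfold Efun
  rw [Finset.Icc_eq_empty (by omega), Finset.sum_empty, zero_add]
  exact Finset.sum_eq_zero fun k _ => Finset.sum_empty

theorem phi_coeff (W : PDO R d) (hW2 : ∀ k : ℤ, 1 < k → W.coeff k = 0)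
    (Y : PDO R d) {N : ℤ} (hY : ∀ n : ℤ, N - 1 < n → Y.coeff n = 0) (p : ℤ) :
    (Y * W + W * Y).coeff p
      = 2 * (W.coeff 1 * Y.coeff (p - 1)) + Efun W N Y.coeff p := by
  rw [add_coeff, mul_coeff Y W hY hW2 p, mul_coeff W Y hW2 hY p]
  by_cases hpN : p ≤ N
  · have h1 : Finset.Icc (p - 1) (N - 1) = insert (p - 1) (Finset.Icc p (N - 1)) := by
      ext x; simp only [Finset.mem_Icc, Finset.mem_insert]; omega
    have hnotmem : p - 1 ∉ Finset.Icc p (N - 1) := by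
      simp only [Finset.mem_Icc]; omega
    rw [h1, Finset.sum_insert hnotmem]
    have h2 : (∑ m ∈ Finset.Icc (p - (p - 1)) 1, Y.coeff (p - 1) *
        (gbinom (p - 1) ((p - 1) + m - p).toNat •
          d^[((p - 1) + m - p).toNat] (W.coeff m)))
        = Y.coeff (p - 1) * W.coeff 1 := by
      rw [show p - (p - 1) = 1 from by omega, Finset.Icc_self, Finset.sum_singleton,
        show ((p - 1) + 1 - p).toNat = 0 from by omega, gbinom_zero', one_smul,
        Function.iterate_zero_apply]
    rw [h2]
    have h3 : ∀ k ∈ Finset.Icc (p - (N - 1)) 1,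
        (∑ m ∈ Finset.Icc (p - k) (N - 1), W.coeff k *
          (gbinom k (k + m - p).toNat • d^[(k + m - p).toNat] (Y.coeff m)))
        = ∑ m ∈ Finset.Icc (p - 1) (N - 1),
            (if 0 ≤ k + m - p then W.coeff k *
              (gbinom k (k + m - p).toNat • d^[(k + m - p).toNat] (Y.coeff m)) else 0) := by
      intro k hk
      simp only [Finset.mem_Icc] at hk
      calc (∑ m ∈ Finset.Icc (p - k) (N - 1), W.coeff k *
              (gbinom k (k + m - p).toNat • d^[(k + m - p).toNat] (Y.coeff m)))
          = ∑ m ∈ Finset.Icc (p - k) (N - 1),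
              (if 0 ≤ k + m - p then W.coeff k *
                (gbinom k (k + m - p).toNat • d^[(k + m - p).toNat] (Y.coeff m)) else 0) :=
            Finset.sum_congr rfl fun m hm => by
              simp only [Finset.mem_Icc] at hm
              rw [if_pos (by omega)]
        _ = ∑ m ∈ Finset.Icc (p - 1) (N - 1),
              (if 0 ≤ k + m - p then W.coeff k *
                (gbinom k (k + m - p).toNat • d^[(k + m - p).toNat] (Y.coeff m)) else 0) := by
            refine Finset.sum_subset (fun x hx => ?_) (fun x hx hxs => ?_)
            · simp only [Finset.mem_Icc] at hx ⊢; omega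
            · simp only [Finset.mem_Icc] at hx hxs
              rw [if_neg (by omega)]
    rw [Finset.sum_congr rfl h3]
    have h4 : ∀ k ∈ Finset.Icc (p - (N - 1)) 1,
        (∑ m ∈ Finset.Icc (p - 1) (N - 1),
          (if 0 ≤ k + m - p then W.coeff k *
            (gbinom k (k + m - p).toNat • d^[(k + m - p).toNat] (Y.coeff m)) else 0))
        = (if 0 ≤ k + (p - 1) - p then W.coeff k *
            (gbinom k (k + (p - 1) - p).toNat •
              d^[(k + (p - 1) - p).toNat] (Y.coeff (p - 1))) else 0)
          + ∑ m ∈ Finset.Icc p (N - 1),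
            (if 0 ≤ k + m - p then W.coeff k *
              (gbinom k (k + m - p).toNat • d^[(k + m - p).toNat] (Y.coeff m)) else 0) :=
      fun k _ => by rw [h1, Finset.sum_insert hnotmem]
    rw [Finset.sum_congr rfl h4, Finset.sum_add_distrib]
    have h5 : ∀ k ∈ Finset.Icc (p - (N - 1)) 1,
        (if 0 ≤ k + (p - 1) - p then W.coeff k *
          (gbinom k (k + (p - 1) - p).toNat •
            d^[(k + (p - 1) - p).toNat] (Y.coeff (p - 1))) else 0)
        = if k = 1 then W.coeff 1 * Y.coeff (p - 1) else 0 := by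
      intro k hk
      simp only [Finset.mem_Icc] at hk
      by_cases hk1 : k = 1
      · subst hk1
        rw [if_pos rfl, if_pos (by omega), show (1 + (p - 1) - p).toNat = 0 from by omega,
          gbinom_zero', one_smul, Function.iterate_zero_apply]
      · rw [if_neg hk1, if_neg (by omega)]
    rw [Finset.sum_congr rfl h5,
      Finset.sum_ite_eq' (Finset.Icc (p - (N - 1)) 1) 1 (fun _ => W.coeff 1 * Y.coeff (p - 1)),
      if_pos (Finset.mem_Icc.2 ⟨by omega, le_refl 1⟩)]
    unfold Efun
    ring
  · rw [Finset.Icc_eq_empty (show ¬ p - 1 ≤ N - 1 from by omega), Finset.sum_empty,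
      hY (p - 1) (by omega), mul_zero, mul_zero, Efun_eq_zero W Y.coeff (by omega)]
    simp only [zero_add, add_zero]
    refine Finset.sum_eq_zero fun k hk => ?_
    simp only [Finset.mem_Icc] at hk
    rw [Finset.Icc_eq_empty (by omega), Finset.sum_empty]

end PDO
end Aux3
section Aux4
set_option linter.unusedSectionVars false
namespace PDO

/-- The recursively defined solution coefficients. -/
noncomputable def ysol {R : Type} [CommRing R] [Algebra ℚ R] {d : R →+ R}
    (W : PDO R d) (h : Rˣ) (a : ℤ → R) (N : ℤ) (n : ℤ) : R :=
  if _hNn : N ≤ n then 0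
  else
    (2⁻¹ : ℚ) • ((↑h⁻¹ : R) *
      (a (n + 1) -
        ((∑ k ∈ (Finset.Icc (n + 1) (N - 1)).attach,
            ∑ m ∈ Finset.Icc (n + 1 - (k : ℤ)) 1,
              ysol W h a N (k : ℤ) *
                (gbinom (k : ℤ) ((k : ℤ) + m - (n + 1)).toNat •
                  d^[((k : ℤ) + m - (n + 1)).toNat] (W.coeff m))) +
          ∑ k ∈ Finset.Icc (n + 1 - (N - 1)) 1,
            ∑ m ∈ (Finset.Icc (n + 1) (N - 1)).attach,
              if 0 ≤ k + (m : ℤ) - (n + 1) then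
                W.coeff k *
                  (gbinom k (k + (m : ℤ) - (n + 1)).toNat •
                    d^[(k + (m : ℤ) - (n + 1)).toNat] (ysol W h a N (m : ℤ)))
              else 0)))
termination_by (N - n).toNat
decreasing_by
  · have hk := k.2; simp only [Finset.mem_Icc] at hk; omega
  · have hm := m.2; simp only [Finset.mem_Icc] at hm; omega

variable {R : Type} [CommRing R] [Algebra ℚ R] {d : R →+ R}

theorem ysol_spec (W : PDO R d) (h : Rˣ) (a : ℤ → R) (N : ℤ) (n : ℤ) :
    ysol W h a N n = if N ≤ n then 0
      else (2⁻¹ : ℚ) • ((↑h⁻¹ : R) *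
        (a (n + 1) - Efun W N (ysol W h a N) (n + 1))) := by
  rw [ysol]
  by_cases hNn : N ≤ n
  · rw [dif_pos hNn, if_pos hNn]
  · rw [dif_neg hNn, if_neg hNn]
    unfold Efun
    have e1 : (∑ k ∈ (Finset.Icc (n + 1) (N - 1)).attach,
        ∑ m ∈ Finset.Icc (n + 1 - (k : ℤ)) 1,
          ysol W h a N (k : ℤ) *
            (gbinom (k : ℤ) ((k : ℤ) + m - (n + 1)).toNat •
              d^[((k : ℤ) + m - (n + 1)).toNat] (W.coeff m)))
        = ∑ k ∈ Finset.Icc (n + 1) (N - 1),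
            ∑ m ∈ Finset.Icc (n + 1 - k) 1,
              ysol W h a N k *
                (gbinom k (k + m - (n + 1)).toNat •
                  d^[(k + m - (n + 1)).toNat] (W.coeff m)) :=
      Finset.sum_attach (Finset.Icc (n + 1) (N - 1)) (fun k =>
        ∑ m ∈ Finset.Icc (n + 1 - k) 1,
          ysol W h a N k * (gbinom k (k + m - (n + 1)).toNat •
            d^[(k + m - (n + 1)).toNat] (W.coeff m)))
    have e2 : (∑ k ∈ Finset.Icc (n + 1 - (N - 1)) 1,
        ∑ m ∈ (Finset.Icc (n + 1) (N - 1)).attach,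
          if 0 ≤ k + (m : ℤ) - (n + 1) then
            W.coeff k *
              (gbinom k (k + (m : ℤ) - (n + 1)).toNat •
                d^[(k + (m : ℤ) - (n + 1)).toNat] (ysol W h a N (m : ℤ)))
          else 0)
        = ∑ k ∈ Finset.Icc (n + 1 - (N - 1)) 1,
            ∑ m ∈ Finset.Icc (n + 1) (N - 1),
              if 0 ≤ k + m - (n + 1) then
                W.coeff k *
                  (gbinom k (k + m - (n + 1)).toNat •
                    d^[(k + m - (n + 1)).toNat] (ysol W h a N m))
              else 0 :=
      Finset.sum_congr rfl fun k _ =>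
        Finset.sum_attach (Finset.Icc (n + 1) (N - 1)) (fun m =>
          if 0 ≤ k + m - (n + 1) then
            W.coeff k * (gbinom k (k + m - (n + 1)).toNat •
              d^[(k + m - (n + 1)).toNat] (ysol W h a N m))
          else 0)
    rw [e1, e2]

theorem ysol_zero (W : PDO R d) (h : Rˣ) (a : ℤ → R) {N n : ℤ} (hn : N ≤ n) :
    ysol W h a N n = 0 := by
  rw [ysol_spec, if_pos hn]

theorem solve_exists (W : PDO R d) (h : Rˣ) (hW1 : W.coeff 1 = (h : R))
    (hW2 : ∀ k : ℤ, 1 < k → W.coeff k = 0) (A : PDO R d) :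
    ∃ Y : PDO R d, Y * W + W * Y = A := by
  obtain ⟨N, hN⟩ := A.bdd
  have hybdd : ∀ n : ℤ, N - 1 < n → ysol W h A.coeff N n = 0 :=
    fun n hn => ysol_zero W h A.coeff (by omega)
  refine ⟨⟨ysol W h A.coeff N, ⟨N - 1, hybdd⟩⟩, ext' (funext fun p => ?_)⟩
  rw [phi_coeff W hW2 ⟨ysol W h A.coeff N, ⟨N - 1, hybdd⟩⟩ hybdd p, hW1]
  show 2 * ((h : R) * ysol W h A.coeff N (p - 1))
      + Efun W N (ysol W h A.coeff N) p = A.coeff p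
  by_cases hp : N ≤ p - 1
  · rw [hybdd (p - 1) (by omega), Efun_eq_zero W _ (by omega), hN p (by omega)]
    ring
  · have hstep := ysol_spec W h A.coeff N (p - 1)
    rw [if_neg hp, show p - 1 + 1 = p from by omega] at hstep
    rw [hstep, mul_smul_comm, mul_smul_comm, Units.mul_inv_cancel_left, two_mul,
      smul_add, ← add_smul]
    norm_num

theorem solve_unique (W : PDO R d) (h : Rˣ) (hW1 : W.coeff 1 = (h : R))
    (hW2 : ∀ k : ℤ, 1 < k → W.coeff k = 0) (Z : PDO R d)
    (hZ : Z * W + W * Z = 0) : Z = 0 := by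
  by_contra hne
  have hex : ∃ n : ℤ, Z.coeff n ≠ 0 := by
    by_contra hall
    push_neg at hall
    exact hne (ext' (funext fun n => hall n))
  obtain ⟨Nb, hNb⟩ := Z.bdd
  obtain ⟨N₀, hN₀, hmax⟩ := Int.exists_greatest_of_bdd
    (P := fun n => Z.coeff n ≠ 0)
    ⟨Nb, fun z hz => by by_contra hlt; exact hz (hNb z (by omega))⟩ hex
  have hZbdd : ∀ n : ℤ, N₀ < n → Z.coeff n = 0 := fun n hn => by
    by_contra hc; exact absurd (hmax n hc) (by omega)
  have hcoeff := congrArg (fun X : PDO R d => X.coeff (N₀ + 1)) hZ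
  rw [add_coeff, mul_coeff Z W hZbdd hW2, mul_coeff W Z hW2 hZbdd, zero_coeff,
    show N₀ + 1 - 1 = N₀ from by omega, show N₀ + 1 - N₀ = 1 from by omega,
    Finset.Icc_self, Finset.Icc_self, Finset.sum_singleton, Finset.sum_singleton] at hcoeff
  rw [show N₀ + 1 - 1 = N₀ from by omega, show N₀ + 1 - N₀ = 1 from by omega,
    Finset.Icc_self, Finset.Icc_self, Finset.sum_singleton, Finset.sum_singleton,
    show (N₀ + 1 - (N₀ + 1)).toNat = 0 from by omega,
    show (1 + N₀ - (N₀ + 1)).toNat = 0 from by omega,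
    gbinom_zero', gbinom_zero', one_smul, one_smul,
    Function.iterate_zero_apply, Function.iterate_zero_apply, hW1] at hcoeff
  have h3 : Z.coeff N₀ + Z.coeff N₀ = 0 := by
    have h2 : (h : R) * Z.coeff N₀ + (h : R) * Z.coeff N₀ = 0 := by
      rw [← hcoeff]; ring
    have := congrArg (fun x => (↑h⁻¹ : R) * x) h2
    simpa [mul_add, Units.inv_mul_cancel_left] using this
  have h4 : Z.coeff N₀ = 0 := by
    have h2s : (2 : ℚ) • Z.coeff N₀ = 0 := by rw [two_smul]; exact h3
    calc Z.coeff N₀ = ((2⁻¹ : ℚ) * 2) • Z.coeff N₀ := by norm_num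
      _ = (2⁻¹ : ℚ) • ((2 : ℚ) • Z.coeff N₀) := by rw [mul_smul]
      _ = 0 := by rw [h2s, smul_zero]
  exact hN₀ h4

end PDO
end Aux4

/-- For every `A` the equation `Y·L^(1/2) + L^(1/2)·Y = A` has a unique solution `Y`;
for `A = −2c` with `∂c = 0` the solution is `Y = −cL^(−1/2)`. -/
theorem anticommutator_equation
    (R : Type) [CommRing R] [Algebra ℚ R] (d : R →+ R)
    (hd : Leibniz d) (h : Rˣ) (hdh : d (h : R) = 0)
    (u : R) (W Winv : PDO R d)
    (hW1 : W.coeff 1 = (h : R)) (hW2 : ∀ k : ℤ, 1 < k → W.coeff k = 0)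
    (hW3 : W * W = PDO.Lop h u)
    (hWinv : W * Winv = 1 ∧ Winv * W = 1) :
    (∀ A : PDO R d, ∃! Y : PDO R d, Y * W + W * Y = A) ∧
    (∀ c : R, d c = 0 →
      (-(PDO.const c * Winv)) * W + W * (-(PDO.const c * Winv)) = PDO.const (-(2 * c))) := by
  constructor
  · intro A
    obtain ⟨Y, hY⟩ := PDO.solve_exists W h hW1 hW2 A
    refine ⟨Y, hY, fun Y' hY' => ?_⟩
    have hz : (Y' - Y) * W + W * (Y' - Y) = 0 := by
      rw [PDO.sub_mul', PDO.mul_sub']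
      calc Y' * W - Y * W + (W * Y' - W * Y)
          = (Y' * W + W * Y') - (Y * W + W * Y) := by abel
        _ = A - A := by rw [hY', hY]
        _ = 0 := sub_self A
    exact sub_eq_zero.mp (PDO.solve_unique W h hW1 hW2 _ hz)
  · intro c hc
    rw [PDO.neg_mul', PDO.mul_neg', PDO.const_mul_assoc, PDO.mul_const_comm_assoc hd hc,
      hWinv.2, hWinv.1, PDO.const_mul_one]
    refine PDO.ext' (funext fun n => ?_)
    rw [PDO.add_coeff, PDO.neg_coeff, PDO.const_coeff, PDO.const_coeff]
    by_cases hn : n = 0 <;> simp [hn] <;> ring
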